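/- Let G be a connected multigraph, Π a partition of V into two connected components A and B, and D the boundary divisor with support in A (D_v = deg_{AB}(v)·χ_A(v)). Then there is no effective divisor D₀ equivalent to D whose support intersects both A and B. -/
import Mathlib

open Finset

/-- Laplacian of a loopless multigraph given by edge multiplicities `m`. -/
def lap {V : Type*} [Fintype V] [DecidableEq V] (m : V → V → ℕ) : Matrix V V ℤ :=
  fun u v => if u = v then (∑ w, (m u w : ℤ)) else -(m u v : ℤ)

/-- Number of edges at `v` crossing between `A` and `B`. -/
def degAB {V : Type*} [Fintype V] [DecidableEq V] (m : V → V → ℕ)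
    (A B : Finset V) (v : V) : ℕ :=
  if v ∈ A then ∑ u ∈ B, m v u else if v ∈ B then ∑ u ∈ A, m v u else 0

lemma lap_mulVec {V : Type*} [Fintype V] [DecidableEq V] (m : V → V → ℕ)
    (hloop : ∀ v, m v v = 0) (σ : V → ℤ) (v : V) :
    (lap m).mulVec σ v = ∑ w, (m v w : ℤ) * (σ v - σ w) := by
  have h2 : (lap m).mulVec σ v = ∑ w, (lap m v w * σ w) := rfl
  have h1 : ∀ w ∈ Finset.univ,
      lap m v w * σ w
        = (if v = w then (∑ u, (m v u : ℤ)) * σ w else 0) - (m v w : ℤ) * σ w := by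
    intro w _
    simp only [lap]
    split_ifs with h
    · subst h; simp [hloop v]
    · ring
  rw [h2, Finset.sum_congr rfl h1, Finset.sum_sub_distrib, Finset.sum_ite_eq]
  simp only [Finset.mem_univ, if_true]
  rw [Finset.sum_mul, ← Finset.sum_sub_distrib]
  exact Finset.sum_congr rfl (fun w _ => by ring)

lemma prop_of_connected {V : Type*} {G : SimpleGraph V} {s : Set V}
    (h : (G.induce s).Connected) (P : V → Prop)
    (hstep : ∀ a b : V, a ∈ s → b ∈ s → G.Adj a b → P a → P b)
    {x y : V} (hx : x ∈ s) (hy : y ∈ s) (hPx : P x) : P y := by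
  obtain ⟨w⟩ := h.preconnected ⟨x, hx⟩ ⟨y, hy⟩
  have key : ∀ (a b : s), (G.induce s).Walk a b → P a → P b := by
    intro a b wab
    induction wab with
    | nil => exact id
    | @cons a c b hac p ih =>
        intro hPa
        exact ih (hstep a c a.2 c.2 hac hPa)
  exact key _ _ w hPx

theorem stmt2 {V : Type*} [Fintype V] [DecidableEq V]
    (m : V → V → ℕ) (hsymm : ∀ u v, m u v = m v u) (hloop : ∀ v, m v v = 0)
    (hconn : (SimpleGraph.fromRel (fun u v => 0 < m u v)).Connected)
    (A B : Finset V) (hdisj : Disjoint A B) (hunion : A ∪ B = Finset.univ)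
    (hAne : A.Nonempty) (hBne : B.Nonempty)
    (hAconn : ((SimpleGraph.fromRel (fun u v => 0 < m u v)).induce (↑A)).Connected)
    (hBconn : ((SimpleGraph.fromRel (fun u v => 0 < m u v)).induce (↑B)).Connected)
    (D : V → ℤ) (hD : D = fun v => (degAB m A B v : ℤ) * (if v ∈ A then 1 else 0)) :
    ¬ ∃ D₀ : V → ℤ, (∀ v, 0 ≤ D₀ v) ∧ (∃ σ : V → ℤ, (lap m).mulVec σ = D₀ - D) ∧
      (∃ v ∈ A, D₀ v ≠ 0) ∧ (∃ v ∈ B, D₀ v ≠ 0) := by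
  rintro ⟨D₀, h0, ⟨σ, hσ⟩, ⟨a, haA, haD⟩, ⟨b, hbB, hbD⟩⟩
  set G := SimpleGraph.fromRel (fun u v => 0 < m u v) with hG
  have hadj : ∀ x y, G.Adj x y → 0 < m x y := by
    intro x y hxy
    rw [hG, SimpleGraph.fromRel_adj] at hxy
    rcases hxy with ⟨hne, h | h⟩
    · exact h
    · rw [hsymm]; exact h
  have hmemAB : ∀ v : V, v ∈ A ∨ v ∈ B := by
    intro v
    have : v ∈ A ∪ B := by rw [hunion]; exact mem_univ v
    exact mem_union.mp this
  have hnotA : ∀ v ∈ B, v ∉ A := fun v hv => (Finset.disjoint_right.mp hdisj hv)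
  have key : ∀ v, D₀ v = D v + ∑ w, (m v w : ℤ) * (σ v - σ w) := by
    intro v
    have h1 := congrFun hσ v
    rw [lap_mulVec m hloop σ v] at h1
    have h2 : (D₀ - D) v = D₀ v - D v := rfl
    rw [h2] at h1
    linarith
  have keyB : ∀ v ∈ B, D₀ v = ∑ w, (m v w : ℤ) * (σ v - σ w) := by
    intro v hv
    rw [key v, hD]
    simp [hnotA v hv]
  have keyA : ∀ v ∈ A, D₀ v = (∑ w ∈ A, (m v w : ℤ) * (σ v - σ w))
      + ∑ w ∈ B, (m v w : ℤ) * (σ v - σ w + 1) := by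
    intro v hv
    have hsplit : ∑ w, (m v w : ℤ) * (σ v - σ w)
        = (∑ w ∈ A, (m v w : ℤ) * (σ v - σ w)) + ∑ w ∈ B, (m v w : ℤ) * (σ v - σ w) := by
      rw [← Finset.sum_union hdisj, hunion]
    have hDv : D v = ∑ u ∈ B, (m v u : ℤ) := by
      rw [hD]
      simp [degAB, hv]
    have hB2 : ∑ w ∈ B, (m v w : ℤ) * (σ v - σ w + 1)
        = (∑ w ∈ B, (m v w : ℤ) * (σ v - σ w)) + ∑ u ∈ B, (m v u : ℤ) := by
      rw [← Finset.sum_add_distrib]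
      exact Finset.sum_congr rfl (fun w _ => by ring)
    rw [key v, hDv, hsplit, hB2]
    ring
  obtain ⟨v₀, -, hmin⟩ := Finset.exists_min_image Finset.univ σ ⟨a, mem_univ a⟩
  replace hmin : ∀ w, σ v₀ ≤ σ w := fun w => hmin w (mem_univ w)
  by_cases hT : ∃ v ∈ B, σ v = σ v₀
  · -- min attained in B: propagate through B, D₀ vanishes on B
    obtain ⟨v, hvB, hvmin⟩ := hT
    have hstepB : ∀ x, x ∈ B → σ x = σ v₀ →
        (∀ w, (m x w : ℤ) * (σ x - σ w) = 0) ∧ D₀ x = 0 := by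
      intro x hx hxm
      have hnp : ∀ w ∈ (univ : Finset V), (m x w : ℤ) * (σ x - σ w) ≤ 0 := by
        intro w _
        exact mul_nonpos_of_nonneg_of_nonpos (by positivity)
          (by rw [hxm]; linarith [hmin w])
      have hsum := keyB x hx
      have h1 : D₀ x ≤ 0 := hsum ▸ Finset.sum_nonpos hnp
      have h2 : D₀ x = 0 := le_antisymm h1 (h0 x)
      have h3 : ∑ w, (m x w : ℤ) * (σ x - σ w) = 0 := by rw [← hsum]; exact h2
      exact ⟨fun w => (Finset.sum_eq_zero_iff_of_nonpos hnp).mp h3 w (mem_univ w), h2⟩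
    have hBmin : ∀ u ∈ B, σ u = σ v₀ := by
      intro u hu
      refine prop_of_connected hBconn (fun z => σ z = σ v₀) ?_
        (Finset.mem_coe.mpr hvB) (Finset.mem_coe.mpr hu) hvmin
      intro x y hx hy hxy hPx
      have hm : 0 < m x y := hadj x y hxy
      have hz := (hstepB x (Finset.mem_coe.mp hx) hPx).1 y
      have hmz : (m x y : ℤ) ≠ 0 := by exact_mod_cast hm.ne'
      have : σ x - σ y = 0 := by
        rcases mul_eq_zero.mp hz with h | h
        · exact absurd h hmz
        · exact h
      omega
    exact hbD (hstepB b hbB (hBmin b hbB)).2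
  · -- min not attained in B: v₀ ∈ A, propagate through A, D₀ vanishes on A
    push_neg at hT
    have hBgt : ∀ u ∈ B, σ v₀ + 1 ≤ σ u := by
      intro u hu
      have h1 := hmin u
      have h2 := hT u hu
      omega
    have hv₀A : v₀ ∈ A := by
      rcases hmemAB v₀ with h | h
      · exact h
      · exact absurd rfl (hT v₀ h)
    have hstepA : ∀ x, x ∈ A → σ x = σ v₀ →
        (∀ w ∈ A, (m x w : ℤ) * (σ x - σ w) = 0) ∧ D₀ x = 0 := by
      intro x hx hxm
      have hnp1 : ∀ w ∈ A, (m x w : ℤ) * (σ x - σ w) ≤ 0 := by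
        intro w _
        exact mul_nonpos_of_nonneg_of_nonpos (by positivity)
          (by rw [hxm]; linarith [hmin w])
      have hnp2 : ∀ w ∈ B, (m x w : ℤ) * (σ x - σ w + 1) ≤ 0 := by
        intro w hw
        refine mul_nonpos_of_nonneg_of_nonpos (by positivity) ?_
        have := hBgt w hw
        omega
      have hsum := keyA x hx
      have s1 : ∑ w ∈ A, (m x w : ℤ) * (σ x - σ w) ≤ 0 := Finset.sum_nonpos hnp1
      have s2 : ∑ w ∈ B, (m x w : ℤ) * (σ x - σ w + 1) ≤ 0 := Finset.sum_nonpos hnp2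
      have h2 : D₀ x = 0 := le_antisymm (by rw [hsum]; linarith) (h0 x)
      have h3 : ∑ w ∈ A, (m x w : ℤ) * (σ x - σ w) = 0 := by
        rw [h2] at hsum
        linarith
      exact ⟨(Finset.sum_eq_zero_iff_of_nonpos hnp1).mp h3, h2⟩
    have hAmin : ∀ u ∈ A, σ u = σ v₀ := by
      intro u hu
      refine prop_of_connected hAconn (fun z => σ z = σ v₀) ?_
        (Finset.mem_coe.mpr hv₀A) (Finset.mem_coe.mpr hu) rfl
      intro x y hx hy hxy hPx
      have hm : 0 < m x y := hadj x y hxy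
      have hz := (hstepA x (Finset.mem_coe.mp hx) hPx).1 y (Finset.mem_coe.mp hy)
      have hmz : (m x y : ℤ) ≠ 0 := by exact_mod_cast hm.ne'
      have : σ x - σ y = 0 := by
        rcases mul_eq_zero.mp hz with h | h
        · exact absurd h hmz
        · exact h
      omega
    exact haD (hstepA a haA (hAmin a haA)).2
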